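/- In the free group F = ⟨a, b⟩ with S = {a^{±1}, b^{±1}}, the conjugation-invariant word norm of [a,b]^k satisfies ‖[a,b]^k‖_S = 2⌊k/2⌋ + 2 for all k ≥ 1; consequently the stable length lim_k ‖[a,b]^k‖_S / k equals 1. -/

import Mathlib

/-- The conjugation-invariant word norm associated with a normally generating
set `S`: the least `ℓ` such that `g` is a product of `ℓ` conjugates of
elements of `S`. -/
noncomputable def cinorm {G : Type*} [Group G] (S : Set G) (g : G) : ℕ :=
  sInf {ℓ : ℕ | ∃ f : Fin ℓ → G,
    (∀ i, ∃ h s, s ∈ S ∧ f i = h * s * h⁻¹) ∧ (List.ofFn f).prod = g}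

noncomputable section

def Amap : ℝ → ℝ := fun t =>
  (⌊t - 1/2⌋ : ℝ) +
    (if t - ⌊t - 1/2⌋ ≤ 3/4 then 3*(t - ⌊t - 1/2⌋) - 5/4 else (t - ⌊t - 1/2⌋)/3 + 3/4)

lemma Amap_eq (n : ℤ) (t : ℝ) (h1 : 1/2 ≤ t - n) (h2 : t - n < 3/2) :
    Amap t = n + (if t - n ≤ 3/4 then 3*(t - n) - 5/4 else (t - n)/3 + 3/4) := by
  have hf : ⌊t - 1/2⌋ = n := by
    rw [Int.floor_eq_iff]
    constructor <;> push_cast <;> linarith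
  simp only [Amap, hf]

lemma Amap_win (t : ℝ) (h1 : (1:ℝ)/2 ≤ t) (h2 : t < 3/2) :
    Amap t = if t ≤ 3/4 then 3*t - 5/4 else t/3 + 3/4 := by
  have := Amap_eq 0 t (by push_cast; linarith) (by push_cast; linarith)
  simpa using this

lemma Amap_win_lb (t : ℝ) (h1 : (1:ℝ)/2 ≤ t) (h2 : t < 3/2) : 1/4 ≤ Amap t := by
  rw [Amap_win t h1 h2]; split <;> linarith

lemma Amap_win_ub (t : ℝ) (h1 : (1:ℝ)/2 ≤ t) (h2 : t < 3/2) : Amap t < 5/4 := by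
  rw [Amap_win t h1 h2]; split <;> linarith

lemma Amap_add_int (t : ℝ) (m : ℤ) : Amap (t + m) = Amap t + m := by
  have hf : ⌊t + m - 1/2⌋ = ⌊t - 1/2⌋ + m := by
    rw [show t + (m:ℝ) - 1/2 = t - 1/2 + m by ring, Int.floor_add_intCast]
  simp only [Amap, hf]
  push_cast
  rw [show t + (m:ℝ) - ((⌊t - 1/2⌋ : ℝ) + m) = t - ⌊t - 1/2⌋ by ring]
  ring

lemma Amap_win_strict (s t : ℝ) (h0 : (1:ℝ)/2 ≤ s) (hst : s < t) (h2 : t < 3/2) :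
    Amap s < Amap t := by
  rw [Amap_win s h0 (lt_trans hst h2), Amap_win t (by linarith) h2]
  split <;> split <;> linarith

/-- one-step strict monotonicity: `s < t ≤ s+1`. -/
lemma Amap_step (s t : ℝ) (hst : s < t) (h1 : t ≤ s + 1) : Amap s < Amap t := by
  set n : ℤ := ⌊s - 1/2⌋ with hn
  have hs1 : 1/2 ≤ s - n := by
    have := Int.sub_one_lt_floor (s - 1/2)
    push_cast at this ⊢
    linarith [Int.floor_le (s - 1/2)]
  have hs2 : s - n < 3/2 := by
    have := Int.lt_floor_add_one (s - 1/2)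
    push_cast
    linarith
  have key : ∀ u v : ℝ, 1/2 ≤ u → u < 3/2 → u < v → v < 5/2 → Amap u < Amap v := by
    intro u v hu1 hu2 huv hv2
    by_cases hv : v < 3/2
    · exact Amap_win_strict u v hu1 huv hv
    · have h3 : Amap v = Amap (v - 1) + 1 := by
        have := Amap_add_int (v - 1) 1
        push_cast at this
        rw [show v - 1 + 1 = v by ring] at this
        rw [this]
      rw [h3]
      have hub := Amap_win_ub u hu1 hu2
      have hlb := Amap_win_lb (v - 1) (by linarith) (by linarith)
      linarith
  have e1 : Amap s = Amap (s - n) + n := by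
    have := Amap_add_int (s - n) n
    rw [show s - (n:ℝ) + n = s by ring] at this
    linarith
  have e2 : Amap t = Amap (t - n) + n := by
    have := Amap_add_int (t - n) n
    rw [show t - (n:ℝ) + n = t by ring] at this
    linarith
  rw [e1, e2]
  have := key (s - n) (t - n) hs1 hs2 (by linarith) (by linarith)
  linarith

lemma Amap_strictMono : StrictMono Amap := by
  have main : ∀ m : ℕ, ∀ s t : ℝ, s < t → t ≤ s + m → Amap s < Amap t := by
    intro m
    induction m with
    | zero => intro s t h1 h2; push_cast at h2; linarith
    | succ k ih =>
      intro s t h1 h2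
      by_cases h : t ≤ s + 1
      · exact Amap_step s t h1 h
      · have h1' : s + 1 < t := by linarith
        have : Amap s < Amap (s + 1) := Amap_step s (s + 1) (by linarith) le_rfl
        refine lt_trans this (ih (s + 1) t h1' ?_)
        push_cast at h2 ⊢
        linarith
  intro s t hst
  obtain ⟨m, hm⟩ : ∃ m : ℕ, t ≤ s + m := by
    obtain ⟨m, hm⟩ := exists_nat_ge (t - s)
    exact ⟨m, by linarith⟩
  exact main m s t hst hm

lemma Amap_surjective : Function.Surjective Amap := by
  intro v
  set m : ℤ := ⌊v - 1/4⌋ with hm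
  have hs1 : 1/4 ≤ v - m := by
    have := Int.floor_le (v - 1/4); push_cast at this ⊢; linarith
  have hs2 : v - m < 5/4 := by
    have := Int.lt_floor_add_one (v - 1/4); push_cast at this ⊢; linarith
  set s : ℝ := v - m with hsdef
  by_cases h : s ≤ 1
  · refine ⟨(s + 5/4)/3 + m, ?_⟩
    rw [Amap_add_int _ m, Amap_win _ (by linarith) (by linarith)]
    rw [if_pos (by linarith)]
    ring_nf
    rw [hsdef]; ring
  · refine ⟨3*(s - 3/4) + m, ?_⟩
    rw [Amap_add_int _ m, Amap_win _ (by linarith) (by linarith)]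
    rw [if_neg (by push_neg; linarith)]
    ring_nf
    rw [hsdef]; ring

lemma Amap_val_half : Amap (1/2) = 1/4 := by
  rw [Amap_win _ (by norm_num) (by norm_num), if_pos (by norm_num)]; norm_num

lemma Amap_val_34 : Amap (3/4) = 1 := by
  rw [Amap_win _ (by norm_num) (by norm_num), if_pos (by norm_num)]; norm_num

lemma Amap_fix : Amap (5/8) = 5/8 := by
  rw [Amap_win _ (by norm_num) (by norm_num), if_pos (by norm_num)]; norm_num


open Equiv

/-- subgroup of monotone bijections of ℝ commuting with translation by 1 -/
def Hgrp : Subgroup (Equiv.Perm ℝ) where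
  carrier := {e | Monotone ⇑e ∧ ∀ t, e (t + 1) = e t + 1}
  one_mem' := ⟨monotone_id, fun t => rfl⟩
  mul_mem' := by
    rintro e f ⟨he1, he2⟩ ⟨hf1, hf2⟩
    refine ⟨?_, fun t => ?_⟩
    · intro s t hst
      simpa [Equiv.Perm.mul_apply] using he1 (hf1 hst)
    · simp [Equiv.Perm.mul_apply, hf2, he2]
  inv_mem' := by
    rintro e ⟨he1, he2⟩
    have hsm : StrictMono ⇑e := he1.strictMono_of_injective e.injective
    refine ⟨?_, fun t => ?_⟩
    · intro s t hst
      have : e (e⁻¹ s) ≤ e (e⁻¹ t) := by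
        simpa [Equiv.Perm.coe_inv] using hst
      exact (hsm.le_iff_le).mp this
    · apply e.injective
      rw [Equiv.Perm.coe_inv, Equiv.apply_symm_apply]
      have := he2 (e⁻¹ t)
      rw [Equiv.Perm.coe_inv, Equiv.apply_symm_apply] at this
      rw [this]

lemma mem_Hgrp {e : Equiv.Perm ℝ} :
    e ∈ Hgrp ↔ Monotone ⇑e ∧ ∀ t, e (t + 1) = e t + 1 := Iff.rfl

noncomputable def permA : Equiv.Perm ℝ :=
  Equiv.ofBijective Amap ⟨Amap_strictMono.injective, Amap_surjective⟩

@[simp] lemma permA_apply (t : ℝ) : permA t = Amap t := rfl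

lemma permA_mem : permA ∈ Hgrp := by
  refine ⟨Amap_strictMono.monotone, fun t => ?_⟩
  simpa using Amap_add_int t 1

def tQuarter : Equiv.Perm ℝ := Equiv.addRight (1/4 : ℝ)

lemma tQuarter_mem : tQuarter ∈ Hgrp := by
  constructor
  · intro s t hst
    simpa [tQuarter] using hst
  · intro t
    simp [tQuarter]
    ring

noncomputable def alphaH : Hgrp := ⟨permA, permA_mem⟩

noncomputable def betaH : Hgrp :=
  ⟨tQuarter⁻¹ * permA * tQuarter, mul_mem (mul_mem (inv_mem tQuarter_mem) permA_mem) tQuarter_mem⟩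

lemma betaH_apply (t : ℝ) : (betaH : Equiv.Perm ℝ) t = Amap (t + 1/4) - 1/4 := by
  show (tQuarter⁻¹ * permA * tQuarter) t = _
  rw [Equiv.Perm.mul_apply, Equiv.Perm.mul_apply]
  have h1 : tQuarter t = t + 1/4 := rfl
  have h2 : ∀ s : ℝ, tQuarter⁻¹ s = s - 1/4 := by
    intro s
    simp [tQuarter, Equiv.Perm.inv_def]
    ring
  rw [h1, h2, permA_apply]

/-- The quasimorphism. -/
noncomputable def Phi (e : Hgrp) : ℤ := ⌊(e : Equiv.Perm ℝ) 0⌋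

lemma Hgrp_add_int (e : Hgrp) (t : ℝ) (m : ℤ) :
    (e : Equiv.Perm ℝ) (t + m) = (e : Equiv.Perm ℝ) t + m := by
  obtain ⟨-, he2⟩ := e.2
  induction m using Int.induction_on with
  | zero => simp
  | succ k ih =>
    have := he2 (t + k)
    push_cast
    push_cast at ih this
    rw [show t + ((k:ℝ) + 1) = t + k + 1 by ring, this, ih]
    ring
  | pred k ih =>
    have := he2 (t + (-(k:ℝ) - 1))
    push_cast
    push_cast at ih this
    rw [show t + (-(k:ℝ) - 1) + 1 = t + -(k:ℝ) by ring] at this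
    linarith

lemma Phi_mul_le (e f : Hgrp) : Phi (e * f) ≤ Phi e + Phi f + 1 := by
  have hmono : Monotone ⇑(e : Equiv.Perm ℝ) := e.2.1
  set q : ℤ := ⌊(f : Equiv.Perm ℝ) 0⌋ with hq
  have h1 : (f : Equiv.Perm ℝ) 0 ≤ ((0:ℝ) + (q + 1 : ℤ)) := by
    push_cast
    linarith [Int.lt_floor_add_one ((f : Equiv.Perm ℝ) 0)]
  have h2 : (e : Equiv.Perm ℝ) ((f : Equiv.Perm ℝ) 0) ≤ (e : Equiv.Perm ℝ) 0 + (q+1 : ℤ) := by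
    calc (e : Equiv.Perm ℝ) ((f : Equiv.Perm ℝ) 0) ≤ (e : Equiv.Perm ℝ) ((0:ℝ) + (q+1:ℤ)) :=
          hmono h1
      _ = (e : Equiv.Perm ℝ) 0 + (q+1:ℤ) := Hgrp_add_int e 0 (q+1)
  have hco : ((e * f : Hgrp) : Equiv.Perm ℝ) 0 = (e : Equiv.Perm ℝ) ((f : Equiv.Perm ℝ) 0) := by
    rfl
  unfold Phi
  rw [hco]
  calc ⌊(e : Equiv.Perm ℝ) ((f : Equiv.Perm ℝ) 0)⌋ ≤ ⌊(e : Equiv.Perm ℝ) 0 + ((q+1:ℤ):ℝ)⌋ :=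
        Int.floor_le_floor h2
    _ = ⌊(e : Equiv.Perm ℝ) 0⌋ + (q+1) := Int.floor_add_intCast _ _
    _ = Phi e + Phi f + 1 := by rw [hq]; unfold Phi; ring

lemma Phi_nonpos_of_fixed (e : Hgrp) (p : ℝ) (hp : (e : Equiv.Perm ℝ) p = p) : Phi e ≤ 0 := by
  have hmono : Monotone ⇑(e : Equiv.Perm ℝ) := e.2.1
  set n : ℤ := ⌊p⌋ with hn
  have h1 : (0:ℝ) ≤ p - n := by
    have := Int.floor_le p; linarith
  have h2 : (e : Equiv.Perm ℝ) 0 ≤ (e : Equiv.Perm ℝ) (p - n) := hmono h1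
  have h3 : (e : Equiv.Perm ℝ) (p - n) = p - n := by
    have := Hgrp_add_int e (p - n) n
    rw [show p - (n:ℝ) + n = p by ring, hp] at this
    linarith
  have h4 : (e : Equiv.Perm ℝ) 0 < 1 := by
    have := Int.lt_floor_add_one p
    rw [h3] at h2
    linarith
  unfold Phi
  have : ⌊(e : Equiv.Perm ℝ) 0⌋ < 1 := Int.floor_lt.mpr (by push_cast; linarith)
  omega

lemma Phi_list_prod (L : List Hgrp) (hne : L ≠ []) (h : ∀ e ∈ L, Phi e ≤ 0) :
    Phi L.prod ≤ L.length - 1 := by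
  induction L with
  | nil => exact absurd rfl hne
  | cons e L ih =>
    rcases eq_or_ne L [] with rfl | hL
    · simpa using h e List.mem_cons_self
    · have h1 := Phi_mul_le e L.prod
      have h2 := ih hL (fun x hx => h x (List.mem_cons_of_mem _ hx))
      have h3 := h e List.mem_cons_self
      simp only [List.prod_cons, List.length_cons]
      push_cast
      push_cast at h2
      omega


def Sset : Set (FreeGroup Bool) :=
  {FreeGroup.of true, (FreeGroup.of true)⁻¹, FreeGroup.of false, (FreeGroup.of false)⁻¹}

noncomputable def xg : FreeGroup Bool := FreeGroup.of true
noncomputable def yg : FreeGroup Bool := FreeGroup.of false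
noncomputable def cg : FreeGroup Bool := xg * yg * xg⁻¹ * yg⁻¹

noncomputable def rhoH : FreeGroup Bool →* Hgrp :=
  FreeGroup.lift (fun b : Bool => if b then alphaH else betaH)

@[simp] lemma rhoH_of_true : rhoH (FreeGroup.of true) = alphaH := by
  simp [rhoH]

@[simp] lemma rhoH_of_false : rhoH (FreeGroup.of false) = betaH := by
  simp [rhoH]

lemma alphaH_coe : ((alphaH : Hgrp) : Equiv.Perm ℝ) = permA := rfl

-- evaluation of the commutator at 0
lemma rhoH_cg_zero : ((rhoH cg : Hgrp) : Equiv.Perm ℝ) 0 = 1 := by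
  have hcg : rhoH cg = alphaH * betaH * alphaH⁻¹ * betaH⁻¹ := by
    simp [cg, xg, yg, map_mul, map_inv]
  rw [hcg]
  have hbinv : ((betaH⁻¹ : Hgrp) : Equiv.Perm ℝ) 0 = 1/4 := by
    have : (betaH : Equiv.Perm ℝ) (1/4) = 0 := by
      rw [betaH_apply]
      norm_num [Amap_val_half]
    calc ((betaH⁻¹ : Hgrp) : Equiv.Perm ℝ) 0 = ((betaH : Hgrp) : Equiv.Perm ℝ)⁻¹ 0 := rfl
      _ = 1/4 := by
          rw [Equiv.Perm.inv_def, Equiv.symm_apply_eq, this]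
  have hainv : ((alphaH⁻¹ : Hgrp) : Equiv.Perm ℝ) (1/4) = 1/2 := by
    calc ((alphaH⁻¹ : Hgrp) : Equiv.Perm ℝ) (1/4) = permA⁻¹ (1/4) := rfl
      _ = 1/2 := by
          rw [Equiv.Perm.inv_def, Equiv.symm_apply_eq]
          show (1:ℝ)/4 = Amap (1/2)
          rw [Amap_val_half]
  have hbeta : ((betaH : Hgrp) : Equiv.Perm ℝ) (1/2) = 3/4 := by
    rw [betaH_apply]
    norm_num [Amap_val_34]
  have halpha : ((alphaH : Hgrp) : Equiv.Perm ℝ) (3/4) = 1 := by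
    rw [alphaH_coe, permA_apply, Amap_val_34]
  show ((alphaH * betaH * alphaH⁻¹ * betaH⁻¹ : Hgrp) : Equiv.Perm ℝ) 0 = 1
  rw [show ((alphaH * betaH * alphaH⁻¹ * betaH⁻¹ : Hgrp) : Equiv.Perm ℝ)
      = ((alphaH : Hgrp) : Equiv.Perm ℝ) * ((betaH : Hgrp) : Equiv.Perm ℝ)
        * ((alphaH⁻¹ : Hgrp) : Equiv.Perm ℝ) * ((betaH⁻¹ : Hgrp) : Equiv.Perm ℝ) from rfl]
  rw [Equiv.Perm.mul_apply, Equiv.Perm.mul_apply, Equiv.Perm.mul_apply]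
  rw [hbinv, hainv, hbeta, halpha]

lemma rhoH_cg_pow_zero (k : ℕ) : (((rhoH cg) ^ k : Hgrp) : Equiv.Perm ℝ) 0 = k := by
  induction k with
  | zero => simp
  | succ n ih =>
    have : ((rhoH cg) ^ (n+1) : Hgrp) = (rhoH cg) * (rhoH cg) ^ n := by
      rw [pow_succ']
    rw [this]
    have hco : (((rhoH cg) * (rhoH cg)^n : Hgrp) : Equiv.Perm ℝ) 0
        = ((rhoH cg : Hgrp) : Equiv.Perm ℝ) ((((rhoH cg)^n : Hgrp) : Equiv.Perm ℝ) 0) := rfl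
    rw [hco, ih]
    have := Hgrp_add_int (rhoH cg) 0 (n : ℤ)
    push_cast at this ⊢
    rw [show ((n:ℝ)) = 0 + (n:ℝ) by ring, this, rhoH_cg_zero]
    ring

lemma Phi_rhoH_cg_pow (k : ℕ) : Phi ((rhoH cg) ^ k) = k := by
  unfold Phi
  rw [rhoH_cg_pow_zero]
  exact Int.floor_intCast k

lemma exists_fixed_gen (s : FreeGroup Bool) (hs : s ∈ Sset) :
    ∃ p : ℝ, ((rhoH s : Hgrp) : Equiv.Perm ℝ) p = p := by
  have halpha : ((alphaH : Hgrp) : Equiv.Perm ℝ) (5/8) = 5/8 := by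
    rw [alphaH_coe, permA_apply, Amap_fix]
  have hbeta : ((betaH : Hgrp) : Equiv.Perm ℝ) (3/8) = 3/8 := by
    rw [betaH_apply]
    norm_num [Amap_fix]
  rcases hs with h | h | h | h
  · exact ⟨5/8, by rw [h, rhoH_of_true]; exact halpha⟩
  · refine ⟨5/8, ?_⟩
    rw [h, map_inv, rhoH_of_true]
    calc ((alphaH⁻¹ : Hgrp) : Equiv.Perm ℝ) (5/8)
        = ((alphaH : Hgrp) : Equiv.Perm ℝ)⁻¹ (5/8) := rfl
      _ = 5/8 := by rw [Equiv.Perm.inv_def, Equiv.symm_apply_eq, halpha]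
  · exact ⟨3/8, by rw [h, rhoH_of_false]; exact hbeta⟩
  · refine ⟨3/8, ?_⟩
    rw [h, map_inv, rhoH_of_false]
    calc ((betaH⁻¹ : Hgrp) : Equiv.Perm ℝ) (3/8)
        = ((betaH : Hgrp) : Equiv.Perm ℝ)⁻¹ (3/8) := rfl
      _ = 3/8 := by rw [Equiv.Perm.inv_def, Equiv.symm_apply_eq, hbeta]

lemma exists_fixed_conj (z : FreeGroup Bool) (h s : FreeGroup Bool) (hs : s ∈ Sset)
    (hz : z = h * s * h⁻¹) : ∃ p : ℝ, ((rhoH z : Hgrp) : Equiv.Perm ℝ) p = p := by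
  obtain ⟨p, hp⟩ := exists_fixed_gen s hs
  refine ⟨((rhoH h : Hgrp) : Equiv.Perm ℝ) p, ?_⟩
  rw [hz, map_mul, map_mul, map_inv]
  show (((rhoH h * rhoH s * (rhoH h)⁻¹ : Hgrp)) : Equiv.Perm ℝ) _ = _
  rw [show (((rhoH h * rhoH s * (rhoH h)⁻¹ : Hgrp)) : Equiv.Perm ℝ)
      = ((rhoH h : Hgrp) : Equiv.Perm ℝ) * ((rhoH s : Hgrp) : Equiv.Perm ℝ)
        * ((rhoH h : Hgrp) : Equiv.Perm ℝ)⁻¹ from rfl]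
  rw [Equiv.Perm.mul_apply, Equiv.Perm.mul_apply, Equiv.Perm.coe_inv, Equiv.symm_apply_apply, hp]

noncomputable def epsH : FreeGroup Bool →* Multiplicative ℤ :=
  FreeGroup.lift (fun _ : Bool => Multiplicative.ofAdd (1 : ℤ))

lemma epsH_cg : epsH cg = 1 := by
  simp [cg, xg, yg, map_mul, map_inv, epsH]

lemma epsH_conj_toAdd (z h s : FreeGroup Bool) (hs : s ∈ Sset) (hz : z = h * s * h⁻¹) :
    Multiplicative.toAdd (epsH z) = 1 ∨ Multiplicative.toAdd (epsH z) = -1 := by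
  have hcomm : epsH z = epsH s := by
    rw [hz, map_mul, map_mul, map_inv]
    rw [mul_comm (epsH h) (epsH s), mul_assoc, mul_inv_cancel, mul_one]
  rw [hcomm]
  rcases hs with h' | h' | h' | h' <;> rw [h'] <;>
    simp [epsH, map_inv]

lemma parity_list (l : List (Multiplicative ℤ))
    (h : ∀ u ∈ l, Multiplicative.toAdd u = 1 ∨ Multiplicative.toAdd u = -1) :
    (Multiplicative.toAdd l.prod + l.length) % 2 = 0 := by
  induction l with
  | nil => simp
  | cons u l ih =>
    have hu := h u List.mem_cons_self
    have ih' := ih (fun v hv => h v (List.mem_cons_of_mem _ hv))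
    simp only [List.prod_cons, List.length_cons, toAdd_mul]
    push_cast
    push_cast at ih'
    omega


lemma lower_bound (k : ℕ) (hk : 1 ≤ k) (ℓ : ℕ) (f : Fin ℓ → FreeGroup Bool)
    (hconj : ∀ i, ∃ h s, s ∈ Sset ∧ f i = h * s * h⁻¹)
    (hprod : (List.ofFn f).prod = cg ^ k) : 2 * (k / 2) + 2 ≤ ℓ := by
  set L : List (FreeGroup Bool) := List.ofFn f with hL
  have hlen : L.length = ℓ := List.length_ofFn
  have hmem : ∀ z ∈ L, ∃ h s, s ∈ Sset ∧ z = h * s * h⁻¹ := by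
    intro z hz
    obtain ⟨i, hi⟩ := List.mem_ofFn.mp hz
    exact hi ▸ hconj i
  -- quasimorphism bound : k + 1 ≤ ℓ
  have hq : k + 1 ≤ ℓ := by
    have hLne : L ≠ [] := by
      intro hnil
      rw [hnil] at hprod
      have : Phi ((rhoH cg) ^ k) = Phi (rhoH (1 : FreeGroup Bool)) := by
        rw [← map_pow, ← hprod]; simp
      rw [Phi_rhoH_cg_pow] at this
      simp only [map_one] at this
      have h1 : Phi (1 : Hgrp) = 0 := by
        show ⌊((1 : Equiv.Perm ℝ)) (0:ℝ)⌋ = 0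
        norm_num
      omega
    have hmap : (L.map rhoH).prod = (rhoH cg) ^ k := by
      rw [← map_list_prod, hprod, map_pow]
    have hPhis : ∀ e ∈ L.map rhoH, Phi e ≤ 0 := by
      intro e he
      obtain ⟨z, hzL, hze⟩ := List.mem_map.mp he
      obtain ⟨h, s, hs, hz⟩ := hmem z hzL
      obtain ⟨p, hp⟩ := exists_fixed_conj z h s hs hz
      exact Phi_nonpos_of_fixed _ p (by rw [hze] at hp; exact hp)
    have hne2 : L.map rhoH ≠ [] := by
      simpa using hLne
    have := Phi_list_prod (L.map rhoH) hne2 hPhis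
    rw [hmap, Phi_rhoH_cg_pow] at this
    have hlen2 : (L.map rhoH).length = ℓ := by rw [List.length_map, hlen]
    rw [hlen2] at this
    omega
  -- parity : ℓ is even
  have hpar : ℓ % 2 = 0 := by
    have hmapE : (L.map epsH).prod = 1 := by
      rw [← map_list_prod, hprod, map_pow, epsH_cg, one_pow]
    have hvals : ∀ u ∈ L.map epsH, Multiplicative.toAdd u = 1 ∨ Multiplicative.toAdd u = -1 := by
      intro u hu
      obtain ⟨z, hzL, hzu⟩ := List.mem_map.mp hu
      obtain ⟨h, s, hs, hz⟩ := hmem z hzL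
      rw [← hzu]
      exact epsH_conj_toAdd z h s hs hz
    have := parity_list (L.map epsH) hvals
    rw [hmapE] at this
    have hlen2 : (L.map epsH).length = ℓ := by rw [List.length_map, hlen]
    rw [hlen2] at this
    simp only [toAdd_one] at this
    omega
  omega


-- ===== upper bound =====

noncomputable def fQ (j : ℕ) : FreeGroup Bool := (yg * xg^j * yg) * xg⁻¹ * (yg * xg^j * yg)⁻¹

noncomputable def Dlist : ℕ → List (FreeGroup Bool)
  | 0 => []
  | d+1 => ((yg * xg^(d+1) * yg⁻¹) * xg * (yg * xg^(d+1) * yg⁻¹)⁻¹) :: Dlist d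

lemma Dlist_length (d : ℕ) : (Dlist d).length = d := by
  induction d with
  | zero => rfl
  | succ d ih => simp [Dlist, ih]

lemma Qprod (d : ℕ) :
    ((List.range d).map fQ).prod = yg * xg⁻¹ * cg^d * xg * (xg^d)⁻¹ * yg⁻¹ := by
  induction d with
  | zero =>
    simp only [List.range_zero, List.map_nil, List.prod_nil, pow_zero]
    group
  | succ d ih =>
    rw [List.range_succ, List.map_append, List.prod_append, ih]
    simp only [List.map_cons, List.map_nil, List.prod_cons, List.prod_nil, mul_one]
    rw [pow_succ cg, pow_succ xg]
    unfold fQ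
    generalize cg^d = C
    generalize xg^d = X
    simp only [cg]
    group

lemma Dprod (d : ℕ) : (Dlist d).prod = yg * xg^d * yg⁻¹ * cg^d := by
  induction d with
  | zero =>
    simp only [Dlist, List.prod_nil, pow_zero]
    group
  | succ d ih =>
    rw [Dlist, List.prod_cons, ih]
    rw [pow_succ' cg, pow_succ xg]
    generalize cg^d = C
    generalize xg^d = X
    simp only [cg]
    group

noncomputable def Lodd (d : ℕ) : List (FreeGroup Bool) :=
  [xg, (yg*xg⁻¹) * yg⁻¹ * (yg*xg⁻¹)⁻¹] ++ (List.range (d+1)).map fQ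
    ++ [(yg*xg^(d+1)) * yg * (yg*xg^(d+1))⁻¹] ++ Dlist d

lemma Lodd_length (d : ℕ) : (Lodd d).length = 2*d + 4 := by
  simp [Lodd, Dlist_length]
  omega

lemma Lodd_prod (d : ℕ) : (Lodd d).prod = cg^(2*d+3) := by
  unfold Lodd
  rw [List.prod_append, List.prod_append, List.prod_append, Qprod, Dprod]
  simp only [List.prod_cons, List.prod_nil, mul_one]
  have h1 : cg^(2*d+3) = cg*cg*cg^d*cg*cg^d := by group
  rw [h1, pow_succ' cg, pow_succ xg]
  generalize cg^d = C
  generalize xg^d = X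
  simp only [cg]
  group

lemma xg_mem : xg ∈ Sset := by simp [Sset, xg]
lemma xg_inv_mem : xg⁻¹ ∈ Sset := by simp [Sset, xg]
lemma yg_mem : yg ∈ Sset := by simp [Sset, yg]
lemma yg_inv_mem : yg⁻¹ ∈ Sset := by simp [Sset, yg]

lemma Dlist_conj (d : ℕ) :
    ∀ z ∈ Dlist d, ∃ h s, s ∈ Sset ∧ z = h * s * h⁻¹ := by
  induction d with
  | zero => intro z hz; simp [Dlist] at hz
  | succ d ih =>
    intro z hz
    simp only [Dlist, List.mem_cons] at hz
    rcases hz with rfl | hz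
    · exact ⟨yg * xg^(d+1) * yg⁻¹, xg, xg_mem, rfl⟩
    · exact ih z hz

lemma Lodd_conj (d : ℕ) :
    ∀ z ∈ Lodd d, ∃ h s, s ∈ Sset ∧ z = h * s * h⁻¹ := by
  intro z hz
  unfold Lodd at hz
  simp only [List.mem_append, List.mem_cons, List.mem_map, List.not_mem_nil, or_false] at hz
  rcases hz with (((hz | hz) | ⟨j, -, rfl⟩) | hz) | hz
  · exact ⟨1, xg, xg_mem, by rw [hz]; group⟩
  · exact ⟨yg*xg⁻¹, yg⁻¹, yg_inv_mem, hz⟩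
  · exact ⟨yg * xg^j * yg, xg⁻¹, xg_inv_mem, rfl⟩
  · exact ⟨yg*xg^(d+1), yg, yg_mem, hz⟩
  · exact Dlist_conj d z hz

noncomputable def P2 : List (FreeGroup Bool) := [xg, yg * xg⁻¹ * yg⁻¹]

lemma P2_prod : P2.prod = cg := by
  simp only [P2, List.prod_cons, List.prod_nil, mul_one, cg]
  group

lemma P2_conj : ∀ z ∈ P2, ∃ h s, s ∈ Sset ∧ z = h * s * h⁻¹ := by
  intro z hz
  simp only [P2, List.mem_cons, List.not_mem_nil, or_false] at hz
  rcases hz with rfl | rfl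
  · exact ⟨1, xg, xg_mem, by group⟩
  · exact ⟨yg, xg⁻¹, xg_inv_mem, rfl⟩

lemma upper_exists (k : ℕ) (hk : 1 ≤ k) :
    ∃ L : List (FreeGroup Bool),
      (∀ z ∈ L, ∃ h s, s ∈ Sset ∧ z = h * s * h⁻¹) ∧
      L.prod = cg ^ k ∧ L.length = 2 * (k / 2) + 2 := by
  have hodd : ∀ j : ℕ, ∃ L : List (FreeGroup Bool),
      (∀ z ∈ L, ∃ h s, s ∈ Sset ∧ z = h * s * h⁻¹) ∧
      L.prod = cg ^ (2*j+1) ∧ L.length = 2*j + 2 := by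
    intro j
    match j with
    | 0 => exact ⟨P2, P2_conj, by rw [P2_prod, pow_one], rfl⟩
    | d+1 =>
      refine ⟨Lodd d, Lodd_conj d, ?_, ?_⟩
      · rw [Lodd_prod]
        congr 1
      · rw [Lodd_length]
        omega
  rcases Nat.even_or_odd k with he | ho
  · obtain ⟨m, hm⟩ := he
    have hm1 : 1 ≤ m := by omega
    obtain ⟨j, hj⟩ : ∃ j, m = j + 1 := ⟨m - 1, by omega⟩
    obtain ⟨L, hc, hp, hl⟩ := hodd j
    refine ⟨L ++ P2, ?_, ?_, ?_⟩
    · intro z hz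
      rcases List.mem_append.mp hz with h | h
      exacts [hc z h, P2_conj z h]
    · rw [List.prod_append, hp, P2_prod, ← pow_succ]
      congr 1
      omega
    · have hP2 : P2.length = 2 := rfl
      rw [List.length_append, hl, hP2]
      omega
  · obtain ⟨j, hj⟩ := ho
    obtain ⟨L, hc, hp, hl⟩ := hodd j
    refine ⟨L, hc, ?_, ?_⟩
    · rw [hp]; congr 1; omega
    · rw [hl]; omega


lemma cinorm_le_of_list {G : Type*} [Group G] (S : Set G) (L : List G)
    (h : ∀ z ∈ L, ∃ h s, s ∈ S ∧ z = h * s * h⁻¹) : cinorm S L.prod ≤ L.length := by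
  apply Nat.sInf_le
  exact ⟨L.get, fun i => h _ (List.get_mem L i), by rw [List.ofFn_get]⟩

lemma cinorm_eq (k : ℕ) (hk : 1 ≤ k) : cinorm Sset (cg ^ k) = 2 * (k / 2) + 2 := by
  obtain ⟨L, hc, hp, hl⟩ := upper_exists k hk
  apply le_antisymm
  · calc cinorm Sset (cg ^ k) = cinorm Sset L.prod := by rw [hp]
      _ ≤ L.length := cinorm_le_of_list _ _ hc
      _ = 2 * (k / 2) + 2 := hl
  · apply le_csInf
    · exact ⟨L.length, L.get, fun i => hc _ (List.get_mem L i), by rw [List.ofFn_get, hp]⟩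
    · rintro b ⟨f, hfc, hfp⟩
      exact lower_bound k hk b f hfc hfp

end

theorem stmt_17 :
    (∀ k : ℕ, 1 ≤ k →
      cinorm ({FreeGroup.of true, (FreeGroup.of true)⁻¹,
               FreeGroup.of false, (FreeGroup.of false)⁻¹} : Set (FreeGroup Bool))
        ((FreeGroup.of true * FreeGroup.of false *
          (FreeGroup.of true)⁻¹ * (FreeGroup.of false)⁻¹) ^ k)
        = 2 * (k / 2) + 2) ∧
    Filter.Tendsto (fun k : ℕ =>
      ((cinorm ({FreeGroup.of true, (FreeGroup.of true)⁻¹,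
               FreeGroup.of false, (FreeGroup.of false)⁻¹} : Set (FreeGroup Bool))
        ((FreeGroup.of true * FreeGroup.of false *
          (FreeGroup.of true)⁻¹ * (FreeGroup.of false)⁻¹) ^ k) : ℝ) / (k : ℝ)))
      Filter.atTop (nhds 1) := by
  have hmain : ∀ k : ℕ, 1 ≤ k →
      cinorm ({FreeGroup.of true, (FreeGroup.of true)⁻¹,
               FreeGroup.of false, (FreeGroup.of false)⁻¹} : Set (FreeGroup Bool))
        ((FreeGroup.of true * FreeGroup.of false *
          (FreeGroup.of true)⁻¹ * (FreeGroup.of false)⁻¹) ^ k)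
        = 2 * (k / 2) + 2 := by
    intro k hk
    exact cinorm_eq k hk
  refine ⟨hmain, ?_⟩
  have hup : Filter.Tendsto (fun k : ℕ => (1 : ℝ) + 2 / k) Filter.atTop (nhds 1) := by
    have h0 : Filter.Tendsto (fun k : ℕ => (2 : ℝ) / k) Filter.atTop (nhds 0) :=
      tendsto_const_div_atTop_nhds_zero_nat 2
    have := Filter.Tendsto.const_add (1 : ℝ) h0
    simpa using this
  refine tendsto_of_tendsto_of_tendsto_of_le_of_le' tendsto_const_nhds hup ?_ ?_
  · filter_upwards [Filter.eventually_ge_atTop 1] with k hk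
    rw [hmain k hk]
    have hkpos : (0:ℝ) < (k:ℝ) := by exact_mod_cast hk
    rw [le_div_iff₀ hkpos, one_mul]
    have : k ≤ 2 * (k / 2) + 2 := by omega
    exact_mod_cast this
  · filter_upwards [Filter.eventually_ge_atTop 1] with k hk
    rw [hmain k hk]
    have hkpos : (0:ℝ) < (k:ℝ) := by exact_mod_cast hk
    rw [div_le_iff₀ hkpos, add_mul, one_mul, div_mul_cancel₀ _ (ne_of_gt hkpos)]
    have : 2 * (k / 2) + 2 ≤ k + 2 := by omega
    exact_mod_cast this
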